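/- arXiv:1605.02484 — 2 statements merged into one kernel-verified Lean document; each statement's English description precedes it below -/
import Mathlib

section
/- Let A, B be positive definite n×n complex matrices and ν ∈ (0,1). Then for every nonnegative integer n₀, in the Loewner order, (A + B)/2 ≤ H_ν(A,B) + (A − 2 A♯B + B) − Σ_{k=0}^{n₀} r_k [ H_{m_k/2^k}(A,B) − 2 H_{(2m_k+1)/2^{k+1}}(A,B) + H_{(m_k+1)/2^k}(A,B) ], where A♯B = A♯_{1/2}B. -/
open scoped ComplexOrder
open Matrix

/-- `r ν k`: the recursively defined coefficients, `r 0 = min {ν, 1-ν}`,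
`r k = min {2 r (k-1), 1 - 2 r (k-1)}`. -/
noncomputable def r (ν : ℝ) : ℕ → ℝ
  | 0 => min ν (1 - ν)
  | k + 1 => min (2 * r ν k) (1 - 2 * r ν k)

/-- `m ν k = ⌊2^k ν⌋`, as a real number. -/
noncomputable def m (ν : ℝ) (k : ℕ) : ℝ := ⌊2 ^ k * ν⌋

variable {d : ℕ}

/-- Real power of a matrix via the functional calculus: for a Hermitian matrix with spectral
decomposition `A = U diag(λᵢ) U*`, `mpow A t = U diag(λᵢ^t) U*` (real powers `Real.rpow` of the
eigenvalues); junk value `A` for non-Hermitian `A`. -/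
noncomputable def mpow (A : Matrix (Fin d) (Fin d) ℂ) (t : ℝ) : Matrix (Fin d) (Fin d) ℂ :=
  if hA : A.IsHermitian then
    (hA.eigenvectorUnitary : Matrix (Fin d) (Fin d) ℂ) *
      Matrix.diagonal (fun i => ((hA.eigenvalues i ^ t : ℝ) : ℂ)) *
      star (hA.eigenvectorUnitary : Matrix (Fin d) (Fin d) ℂ)
  else A

/-- The μ-weighted geometric mean `A♯_μ B = A^{1/2} (A^{-1/2} B A^{-1/2})^μ A^{1/2}`. -/
noncomputable def sharp (A B : Matrix (Fin d) (Fin d) ℂ) (μ : ℝ) : Matrix (Fin d) (Fin d) ℂ :=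
  mpow A (1 / 2) * mpow (mpow A (-(1 / 2)) * B * mpow A (-(1 / 2))) μ * mpow A (1 / 2)


/-- The Heinz mean `H_μ(A,B) = (A♯_μ B + A♯_{1-μ} B)/2`. -/
noncomputable def heinz (A B : Matrix (Fin d) (Fin d) ℂ) (μ : ℝ) : Matrix (Fin d) (Fin d) ℂ :=
  ((1 : ℝ) / 2) • (sharp A B μ + sharp A B (1 - μ))


section arith
variable {ν : ℝ} (hν : ν ∈ Set.Ioo (0 : ℝ) 1)
include hν

lemma m_nonneg (k : ℕ) : 0 ≤ m ν k := by
  unfold m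
  exact_mod_cast Int.floor_nonneg.mpr (mul_nonneg (by positivity) hν.1.le)

lemma m_le (k : ℕ) : m ν k ≤ 2 ^ k * ν := Int.floor_le _

lemma lt_m_add_one (k : ℕ) : 2 ^ k * ν < m ν k + 1 := Int.lt_floor_add_one _

lemma m_add_one_le (k : ℕ) : m ν k + 1 ≤ 2 ^ k := by
  have h2 : (0:ℝ) < 2 ^ k := by positivity
  have : ⌊(2:ℝ) ^ k * ν⌋ < (2 ^ k : ℤ) := by
    apply Int.floor_lt.mpr
    push_cast
    nlinarith [hν.2]
  have := Int.add_one_le_iff.mpr this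
  unfold m
  exact_mod_cast this

lemma m_zero : m ν 0 = 0 := by
  have h : ⌊(1:ℝ) * ν⌋ = 0 := Int.floor_eq_zero_iff.mpr ⟨by simpa using hν.1.le, by simpa using hν.2⟩
  unfold m
  rw [pow_zero, h]
  norm_num

lemma m_succ_left {k : ℕ} (h : 2 ^ k * ν - m ν k < 1 / 2) : m ν (k + 1) = 2 * m ν k := by
  have e : (2:ℝ) ^ (k+1) * ν = (2 ^ k * ν - ⌊2 ^ k * ν⌋) * 2 + ((2 * ⌊(2:ℝ) ^ k * ν⌋ : ℤ) : ℝ) := by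
    push_cast; ring
  have h0 : (0:ℝ) ≤ 2 ^ k * ν - ⌊2 ^ k * ν⌋ := by
    have := Int.floor_le ((2:ℝ) ^ k * ν); linarith
  have hfl : ⌊((2:ℝ) ^ k * ν - ⌊2 ^ k * ν⌋) * 2⌋ = 0 := by
    apply Int.floor_eq_zero_iff.mpr
    constructor
    · linarith
    · show _ < (1:ℝ)
      unfold m at h; linarith
  unfold m
  rw [e, Int.floor_add_intCast, hfl]
  push_cast; ring

lemma m_succ_right {k : ℕ} (h : 1 / 2 ≤ 2 ^ k * ν - m ν k) : m ν (k + 1) = 2 * m ν k + 1 := by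
  have e : (2:ℝ) ^ (k+1) * ν = (2 ^ k * ν - ⌊2 ^ k * ν⌋) * 2 + ((2 * ⌊(2:ℝ) ^ k * ν⌋ : ℤ) : ℝ) := by
    push_cast; ring
  have h1 : (2:ℝ) ^ k * ν - ⌊2 ^ k * ν⌋ < 1 := by
    have := Int.lt_floor_add_one ((2:ℝ) ^ k * ν); linarith
  have hfl : ⌊((2:ℝ) ^ k * ν - ⌊2 ^ k * ν⌋) * 2⌋ = 1 := by
    apply Int.floor_eq_iff.mpr
    constructor
    · push_cast
      unfold m at h; linarith
    · push_cast; linarith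
  unfold m
  rw [e, Int.floor_add_intCast, hfl]
  push_cast; ring

lemma r_eq (k : ℕ) : r ν k = min (2 ^ k * ν - m ν k) (1 - (2 ^ k * ν - m ν k)) := by
  induction k with
  | zero =>
    rw [m_zero hν]
    norm_num [r]
  | succ k ih =>
    have h0 : (0:ℝ) ≤ 2 ^ k * ν - m ν k := by have := m_le hν k; linarith
    have h1 : 2 ^ k * ν - m ν k < 1 := by have := lt_m_add_one hν k; linarith
    rcases lt_or_ge (2 ^ k * ν - m ν k) (1/2) with h | h
    · have hm := m_succ_left hν h
      have ht : 2 ^ (k+1) * ν - m ν (k+1) = 2 * (2 ^ k * ν - m ν k) := by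
        rw [hm, pow_succ]; ring
      rw [r, ih, ht,
        min_eq_left (show 2 ^ k * ν - m ν k ≤ 1 - (2 ^ k * ν - m ν k) by linarith)]
    · have hm := m_succ_right hν h
      have ht : 2 ^ (k+1) * ν - m ν (k+1) = 2 * (2 ^ k * ν - m ν k) - 1 := by
        rw [hm, pow_succ]; ring
      rw [r, ih, ht,
        min_eq_right (show 1 - (2 ^ k * ν - m ν k) ≤ 2 ^ k * ν - m ν k by linarith), min_comm]
      congr 1 <;> ring

lemma r_nonneg (k : ℕ) : 0 ≤ r ν k := by
  rw [r_eq hν]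
  have h0 : (0:ℝ) ≤ 2 ^ k * ν - m ν k := by have := m_le hν k; linarith
  have h1 : 2 ^ k * ν - m ν k < 1 := by have := lt_m_add_one hν k; linarith
  simp only [le_min_iff]
  constructor <;> linarith

lemma mem_Icc_a (k : ℕ) : m ν k / 2 ^ k ∈ Set.Icc (0:ℝ) 1 := by
  have h2 : (0:ℝ) < 2 ^ k := by positivity
  constructor
  · exact div_nonneg (m_nonneg hν k) h2.le
  · rw [div_le_one h2]
    have := m_add_one_le hν k; linarith

lemma mem_Icc_b (k : ℕ) : (m ν k + 1) / 2 ^ k ∈ Set.Icc (0:ℝ) 1 := by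
  have h2 : (0:ℝ) < 2 ^ k := by positivity
  constructor
  · have := m_nonneg hν k
    apply div_nonneg (by linarith) h2.le
  · rw [div_le_one h2]
    exact m_add_one_le hν k

end arith

/-- the convexity gap `G_k` -/
noncomputable def Gap (f : ℝ → ℝ) (ν : ℝ) (k : ℕ) : ℝ :=
  2 ^ k * (((m ν k + 1) / 2 ^ k - ν) * f (m ν k / 2 ^ k)
    + (ν - m ν k / 2 ^ k) * f ((m ν k + 1) / 2 ^ k)) - f ν

section convex
variable (f : ℝ → ℝ) (hf : ConvexOn ℝ (Set.Icc 0 1) f) {ν : ℝ} (hν : ν ∈ Set.Ioo (0 : ℝ) 1)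
include hf hν

lemma delta_nonneg (k : ℕ) :
    0 ≤ f (m ν k / 2 ^ k) - 2 * f ((2 * m ν k + 1) / 2 ^ (k+1)) + f ((m ν k + 1) / 2 ^ k) := by
  have h2 : (0:ℝ) < 2 ^ k := by positivity
  have hmid : (2 * m ν k + 1) / 2 ^ (k+1)
      = (1/2 : ℝ) • (m ν k / 2 ^ k) + (1/2 : ℝ) • ((m ν k + 1) / 2 ^ k) := by
    rw [pow_succ]
    simp only [smul_eq_mul]
    ring
  have := hf.2 (mem_Icc_a hν k) (mem_Icc_b hν k) (by norm_num : (0:ℝ) ≤ 1/2)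
    (by norm_num : (0:ℝ) ≤ 1/2) (by norm_num)
  rw [← hmid] at this
  simp only [smul_eq_mul] at this
  linarith

lemma gap_nonneg (k : ℕ) : 0 ≤ Gap f ν k := by
  have h2 : (0:ℝ) < 2 ^ k := by positivity
  have ha := m_le hν k
  have hb := lt_m_add_one hν k
  have hcomb := hf.2 (mem_Icc_a hν k) (mem_Icc_b hν k)
    (by nlinarith : (0:ℝ) ≤ m ν k + 1 - 2 ^ k * ν)
    (by nlinarith : (0:ℝ) ≤ 2 ^ k * ν - m ν k) (by ring)
  simp only [smul_eq_mul] at hcomb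
  have harg : (m ν k + 1 - 2 ^ k * ν) * (m ν k / 2 ^ k)
      + (2 ^ k * ν - m ν k) * ((m ν k + 1) / 2 ^ k) = ν := by
    field_simp
    ring
  rw [harg] at hcomb
  unfold Gap
  have c1 : (2:ℝ) ^ k * ((m ν k + 1) / 2 ^ k) = m ν k + 1 := by field_simp
  have c2 : (2:ℝ) ^ k * (m ν k / 2 ^ k) = m ν k := by field_simp
  have hexp : 2 ^ k * (((m ν k + 1) / 2 ^ k - ν) * f (m ν k / 2 ^ k)
      + (ν - m ν k / 2 ^ k) * f ((m ν k + 1) / 2 ^ k))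
      = (m ν k + 1 - 2 ^ k * ν) * f (m ν k / 2 ^ k)
        + (2 ^ k * ν - m ν k) * f ((m ν k + 1) / 2 ^ k) := by
    linear_combination f (m ν k / 2 ^ k) * c1 - f ((m ν k + 1) / 2 ^ k) * c2
  rw [hexp]
  linarith

lemma convex_step (k : ℕ) :
    r ν k * (f (m ν k / 2 ^ k) - 2 * f ((2 * m ν k + 1) / 2 ^ (k+1)) + f ((m ν k + 1) / 2 ^ k))
      + Gap f ν (k+1) ≤ Gap f ν k := by
  have h2 : ((2:ℝ) ^ k) ≠ 0 := by positivity
  have h0 : (0:ℝ) ≤ 2 ^ k * ν - m ν k := by have := m_le hν k; linarith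
  have h1 : 2 ^ k * ν - m ν k < 1 := by have := lt_m_add_one hν k; linarith
  have hΔ := delta_nonneg f hf hν k
  rcases lt_or_ge (2 ^ k * ν - m ν k) (1/2) with h | h
  · have hm := m_succ_left hν h
    have hr : r ν k ≤ 2 ^ k * ν - m ν k := by
      rw [r_eq hν]; exact min_le_left _ _
    have e1 : m ν (k+1) / 2 ^ (k+1) = m ν k / 2 ^ k := by
      rw [hm, pow_succ]; field_simp
    have e2 : (m ν (k+1) + 1) / 2 ^ (k+1) = (2 * m ν k + 1) / 2 ^ (k+1) := by rw [hm]
    have hident : Gap f ν k = (2 ^ k * ν - m ν k) *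
        (f (m ν k / 2 ^ k) - 2 * f ((2 * m ν k + 1) / 2 ^ (k+1)) + f ((m ν k + 1) / 2 ^ k))
        + Gap f ν (k+1) := by
      unfold Gap
      rw [e1, e2, pow_succ]
      field_simp
      ring
    rw [hident]
    have := mul_le_mul_of_nonneg_right hr hΔ
    linarith
  · have hm := m_succ_right hν h
    have hr : r ν k ≤ 1 - (2 ^ k * ν - m ν k) := by
      rw [r_eq hν]; exact min_le_right _ _
    have e1 : m ν (k+1) / 2 ^ (k+1) = (2 * m ν k + 1) / 2 ^ (k+1) := by rw [hm]
    have e2 : (m ν (k+1) + 1) / 2 ^ (k+1) = (m ν k + 1) / 2 ^ k := by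
      rw [hm, pow_succ]; field_simp; ring
    have hident : Gap f ν k = (1 - (2 ^ k * ν - m ν k)) *
        (f (m ν k / 2 ^ k) - 2 * f ((2 * m ν k + 1) / 2 ^ (k+1)) + f ((m ν k + 1) / 2 ^ k))
        + Gap f ν (k+1) := by
      unfold Gap
      rw [e1, e2, pow_succ]
      field_simp
      ring
    rw [hident]
    have := mul_le_mul_of_nonneg_right hr hΔ
    linarith

lemma convex_refine (N : ℕ) :
    ∑ k ∈ Finset.range (N+1), r ν k *
      (f (m ν k / 2 ^ k) - 2 * f ((2 * m ν k + 1) / 2 ^ (k+1)) + f ((m ν k + 1) / 2 ^ k))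
      + Gap f ν (N+1) ≤ Gap f ν 0 := by
  induction N with
  | zero =>
    rw [Finset.sum_range_one]
    exact convex_step f hf hν 0
  | succ N ih =>
    rw [Finset.sum_range_succ]
    have := convex_step f hf hν (N+1)
    linarith

end convex

lemma gap_zero (f : ℝ → ℝ) {ν : ℝ} (hν : ν ∈ Set.Ioo (0 : ℝ) 1) :
    Gap f ν 0 = (1 - ν) * f 0 + ν * f 1 - f ν := by
  unfold Gap
  rw [m_zero hν]
  norm_num

lemma convexOn_heinz {x : ℝ} (hx : 0 < x) :
    ConvexOn ℝ (Set.Icc (0:ℝ) 1) (fun μ : ℝ => (x ^ μ + x ^ (1 - μ)) / 2) := by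
  have h1 : ConvexOn ℝ (Set.univ) (fun μ : ℝ => Real.exp (Real.log x * μ)) := by
    have h := convexOn_exp.comp_affineMap (AffineMap.lineMap (0:ℝ) (Real.log x))
    have e : (Real.exp ∘ ⇑(AffineMap.lineMap (0:ℝ) (Real.log x)))
        = fun μ : ℝ => Real.exp (Real.log x * μ) := by
      funext μ
      simp [AffineMap.lineMap_apply, mul_comm]
    rw [e] at h
    simpa using h
  have h2 : ConvexOn ℝ (Set.univ) (fun μ : ℝ => Real.exp (Real.log x * (1 - μ))) := by
    have h := convexOn_exp.comp_affineMap (AffineMap.lineMap (Real.log x) (0:ℝ))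
    have e : (Real.exp ∘ ⇑(AffineMap.lineMap (Real.log x) (0:ℝ)))
        = fun μ : ℝ => Real.exp (Real.log x * (1 - μ)) := by
      funext μ
      simp [AffineMap.lineMap_apply]
      ring_nf
    rw [e] at h
    simpa using h
  have hsum := (h1.add h2).smul (by norm_num : (0:ℝ) ≤ 1/2)
  have e2 : (fun μ : ℝ => (x ^ μ + x ^ (1 - μ)) / 2)
      = fun x_1 : ℝ => ((1:ℝ)/2) • ((fun μ : ℝ => Real.exp (Real.log x * μ))
        + fun μ : ℝ => Real.exp (Real.log x * (1 - μ))) x_1 := by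
    funext μ
    simp [Pi.add_apply, smul_eq_mul, Real.rpow_def_of_pos hx]
    ring
  rw [e2]
  exact hsum.subset (Set.subset_univ _) (convex_Icc 0 1)

lemma scalar_key {ν : ℝ} (hν : ν ∈ Set.Ioo (0:ℝ) 1) (N : ℕ) {x : ℝ} (hx : 0 < x) :
    ∑ k ∈ Finset.range (N+1), r ν k *
      ((x ^ (m ν k / 2 ^ k) + x ^ (1 - m ν k / 2 ^ k)) / 2
        - 2 * ((x ^ ((2 * m ν k + 1) / 2 ^ (k+1)) + x ^ (1 - (2 * m ν k + 1) / 2 ^ (k+1))) / 2)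
        + (x ^ ((m ν k + 1) / 2 ^ k) + x ^ (1 - (m ν k + 1) / 2 ^ k)) / 2)
    ≤ (x ^ ν + x ^ (1 - ν)) / 2 + (1 - 2 * x ^ ((1:ℝ)/2) + x) - (1 + x) / 2 := by
  set f : ℝ → ℝ := fun μ => (x ^ μ + x ^ (1 - μ)) / 2 with hfdef
  have hf : ConvexOn ℝ (Set.Icc 0 1) f := convexOn_heinz hx
  have main := convex_refine f hf hν N
  have hgapN := gap_nonneg f hf hν (N+1)
  have hf0 : f 0 = (1 + x) / 2 := by simp [hfdef]
  have hf1 : f 1 = (1 + x) / 2 := by simp [hfdef]; ring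
  have hgap0' : Gap f ν 0 = (1 + x) / 2 - f ν := by
    rw [gap_zero f hν, hf0, hf1]; ring
  have hfν : x ^ ((1:ℝ)/2) ≤ f ν := by
    have e1 : x ^ (ν/2) * x ^ (ν/2) = x ^ ν := by
      rw [← Real.rpow_add hx]; ring_nf
    have e2 : x ^ ((1-ν)/2) * x ^ ((1-ν)/2) = x ^ (1-ν) := by
      rw [← Real.rpow_add hx]; ring_nf
    have e3 : x ^ (ν/2) * x ^ ((1-ν)/2) = x ^ ((1:ℝ)/2) := by
      rw [← Real.rpow_add hx]; ring_nf
    have hsq := sq_nonneg (x ^ (ν/2) - x ^ ((1-ν)/2))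
    simp only [hfdef]
    nlinarith [hsq, e1, e2, e3]
  have hrhs : (x ^ ν + x ^ (1 - ν)) / 2 = f ν := rfl
  rw [hrhs]
  have hsummand : ∀ k ∈ Finset.range (N+1), r ν k *
      ((x ^ (m ν k / 2 ^ k) + x ^ (1 - m ν k / 2 ^ k)) / 2
        - 2 * ((x ^ ((2 * m ν k + 1) / 2 ^ (k+1)) + x ^ (1 - (2 * m ν k + 1) / 2 ^ (k+1))) / 2)
        + (x ^ ((m ν k + 1) / 2 ^ k) + x ^ (1 - (m ν k + 1) / 2 ^ k)) / 2)
      = r ν k * (f (m ν k / 2 ^ k) - 2 * f ((2 * m ν k + 1) / 2 ^ (k+1))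
          + f ((m ν k + 1) / 2 ^ k)) := fun k _ => rfl
  rw [Finset.sum_congr rfl hsummand]
  linarith [main, hgapN, hfν, hgap0']

section herm

variable (A : Matrix (Fin d) (Fin d) ℂ) (hA : A.IsHermitian)

/-- functional calculus for a Hermitian matrix -/
noncomputable def herm (f : ℝ → ℝ) : Matrix (Fin d) (Fin d) ℂ :=
  (hA.eigenvectorUnitary : Matrix (Fin d) (Fin d) ℂ) *
    Matrix.diagonal (fun i => ((f (hA.eigenvalues i) : ℝ) : ℂ)) *
    star (hA.eigenvectorUnitary : Matrix (Fin d) (Fin d) ℂ)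

lemma mpow_eq_herm (t : ℝ) : mpow A t = herm A hA (fun x => x ^ t) := by
  unfold mpow herm
  rw [dif_pos hA]

lemma herm_add (f g : ℝ → ℝ) :
    herm A hA f + herm A hA g = herm A hA (fun x => f x + g x) := by
  have hdi : (Matrix.diagonal fun i => ((f (hA.eigenvalues i) : ℝ) : ℂ))
      + (Matrix.diagonal fun i => ((g (hA.eigenvalues i) : ℝ) : ℂ))
      = Matrix.diagonal fun i => ((f (hA.eigenvalues i) + g (hA.eigenvalues i) : ℝ) : ℂ) := by
    rw [Matrix.diagonal_add]
    exact congrArg _ (funext fun i => by push_cast; rfl)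
  unfold herm
  rw [← Matrix.add_mul, ← Matrix.mul_add, hdi]

lemma herm_smul (c : ℝ) (f : ℝ → ℝ) :
    c • herm A hA f = herm A hA (fun x => c * f x) := by
  have hdi : c • (Matrix.diagonal fun i => ((f (hA.eigenvalues i) : ℝ) : ℂ))
      = Matrix.diagonal fun i => ((c * f (hA.eigenvalues i) : ℝ) : ℂ) := by
    rw [← Matrix.diagonal_smul]
    exact congrArg _ (funext fun i => by
      simp [Pi.smul_apply, Complex.real_smul])
  unfold herm
  rw [← smul_mul_assoc, ← mul_smul_comm, hdi]

lemma herm_sub (f g : ℝ → ℝ) :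
    herm A hA f - herm A hA g = herm A hA (fun x => f x - g x) := by
  have hdi : (Matrix.diagonal fun i => ((f (hA.eigenvalues i) : ℝ) : ℂ))
      - (Matrix.diagonal fun i => ((g (hA.eigenvalues i) : ℝ) : ℂ))
      = Matrix.diagonal fun i => ((f (hA.eigenvalues i) - g (hA.eigenvalues i) : ℝ) : ℂ) := by
    rw [Matrix.diagonal_sub]
    exact congrArg _ (funext fun i => by push_cast; rfl)
  unfold herm
  rw [← Matrix.sub_mul, ← Matrix.mul_sub, hdi]

lemma herm_sum (s : Finset ℕ) (g : ℕ → ℝ → ℝ) :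
    (∑ k ∈ s, herm A hA (g k)) = herm A hA (fun x => ∑ k ∈ s, g k x) := by
  classical
  induction s using Finset.induction_on with
  | empty => simp [herm]
  | insert _ _ h ih =>
    rw [Finset.sum_insert h, ih, herm_add]
    exact congrArg (herm A hA) (funext fun x => by rw [Finset.sum_insert h])

lemma herm_congr {f g : ℝ → ℝ} (h : ∀ i, f (hA.eigenvalues i) = g (hA.eigenvalues i)) :
    herm A hA f = herm A hA g := by
  unfold herm
  rw [show (fun i => ((f (hA.eigenvalues i) : ℝ) : ℂ)) = fun i => ((g (hA.eigenvalues i) : ℝ) : ℂ)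
    from funext fun i => by rw [h i]]

lemma herm_mul (f g : ℝ → ℝ) :
    herm A hA f * herm A hA g = herm A hA (fun x => f x * g x) := by
  have hU : star (hA.eigenvectorUnitary : Matrix (Fin d) (Fin d) ℂ) *
      (hA.eigenvectorUnitary : Matrix (Fin d) (Fin d) ℂ) = 1 :=
    Matrix.mem_unitaryGroup_iff'.mp hA.eigenvectorUnitary.2
  have hcan : ∀ X : Matrix (Fin d) (Fin d) ℂ,
      star (hA.eigenvectorUnitary : Matrix (Fin d) (Fin d) ℂ) *
        ((hA.eigenvectorUnitary : Matrix (Fin d) (Fin d) ℂ) * X) = X := fun X => by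
    rw [← Matrix.mul_assoc, hU, Matrix.one_mul]
  unfold herm
  simp only [Matrix.mul_assoc]
  have hdd : (fun i => ((f (hA.eigenvalues i) : ℝ) : ℂ) * ((g (hA.eigenvalues i) : ℝ) : ℂ))
      = fun i => ((f (hA.eigenvalues i) * g (hA.eigenvalues i) : ℝ) : ℂ) :=
    funext fun i => by push_cast; rfl
  rw [hcan, ← Matrix.mul_assoc (Matrix.diagonal _) (Matrix.diagonal _),
    Matrix.diagonal_mul_diagonal, hdd]

lemma herm_one : herm A hA (fun _ => 1) = 1 := by
  have hU : (hA.eigenvectorUnitary : Matrix (Fin d) (Fin d) ℂ) *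
      star (hA.eigenvectorUnitary : Matrix (Fin d) (Fin d) ℂ) = 1 :=
    Matrix.mem_unitaryGroup_iff.mp hA.eigenvectorUnitary.2
  unfold herm
  simp [hU]

lemma herm_id : herm A hA (fun x => x) = A := by
  conv_rhs => rw [hA.spectral_theorem]
  rfl

lemma herm_isHermitian (f : ℝ → ℝ) : (herm A hA f).IsHermitian := by
  have hdi : (Matrix.diagonal fun i => ((f (hA.eigenvalues i) : ℝ) : ℂ))ᴴ
      = Matrix.diagonal fun i => ((f (hA.eigenvalues i) : ℝ) : ℂ) := by
    rw [Matrix.diagonal_conjTranspose]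
    exact congrArg _ (funext fun i => by simp [Pi.star_apply, Complex.conj_ofReal])
  show _ᴴ = _
  simp only [herm, Matrix.conjTranspose_mul, Matrix.star_eq_conjTranspose,
    Matrix.conjTranspose_conjTranspose, hdi, Matrix.mul_assoc]

lemma herm_posSemidef (f : ℝ → ℝ) (h : ∀ i, 0 ≤ f (hA.eigenvalues i)) :
    (herm A hA f).PosSemidef := by
  have hd : (Matrix.diagonal (fun i => ((f (hA.eigenvalues i) : ℝ) : ℂ))).PosSemidef :=
    Matrix.posSemidef_diagonal_iff.mpr fun i => Complex.zero_le_real.mpr (h i)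
  have := hd.mul_mul_conjTranspose_same (hA.eigenvectorUnitary : Matrix (Fin d) (Fin d) ℂ)
  rwa [← Matrix.star_eq_conjTranspose] at this

end herm

section mpow
variable {A : Matrix (Fin d) (Fin d) ℂ}

lemma mpow_mul_mpow (hA : A.PosDef) (s t : ℝ) : mpow A s * mpow A t = mpow A (s + t) := by
  rw [mpow_eq_herm A hA.1, mpow_eq_herm A hA.1, mpow_eq_herm A hA.1, herm_mul]
  exact herm_congr A hA.1 fun i => (Real.rpow_add (hA.eigenvalues_pos i) s t).symm

lemma mpow_zero (hA : A.IsHermitian) : mpow A 0 = 1 := by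
  rw [mpow_eq_herm A hA]
  rw [herm_congr A hA (g := fun _ => (1:ℝ)) fun i => Real.rpow_zero _]
  exact herm_one A hA

lemma mpow_one (hA : A.IsHermitian) : mpow A 1 = A := by
  rw [mpow_eq_herm A hA]
  rw [herm_congr A hA (g := fun x => x) fun i => Real.rpow_one _]
  exact herm_id A hA

lemma mpow_isHermitian (hA : A.IsHermitian) (t : ℝ) : (mpow A t).IsHermitian := by
  rw [mpow_eq_herm A hA]; exact herm_isHermitian A hA _
end mpow

theorem stmt15 (A B : Matrix (Fin d) (Fin d) ℂ) (hA : A.PosDef) (hB : B.PosDef)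
    (ν : ℝ) (hν : ν ∈ Set.Ioo (0 : ℝ) 1) (n₀ : ℕ) :
    (heinz A B ν + (A - (2 : ℝ) • sharp A B (1 / 2) + B) -
      (∑ k ∈ Finset.range (n₀ + 1), r ν k •
        (heinz A B (m ν k / 2 ^ k) - (2 : ℝ) • heinz A B ((2 * m ν k + 1) / 2 ^ (k + 1)) +
          heinz A B ((m ν k + 1) / 2 ^ k))) -
      ((1 : ℝ) / 2) • (A + B)).PosSemidef := by
  have hAH : A.IsHermitian := hA.1
  simp only [heinz, sharp]
  set Sm := mpow A (-(1/2)) with hSm_def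
  set S := mpow A (1/2) with hS_def
  set C := Sm * B * Sm with hC_def
  have hSmH : Sm.IsHermitian := mpow_isHermitian hAH _
  have hSH : S.IsHermitian := mpow_isHermitian hAH _
  have hSSm : S * Sm = 1 := by
    rw [hS_def, hSm_def, mpow_mul_mpow hA, show (1/2 + -(1/2) : ℝ) = 0 by ring, mpow_zero hAH]
  have hSmS : Sm * S = 1 := by
    rw [hS_def, hSm_def, mpow_mul_mpow hA, show (-(1/2) + 1/2 : ℝ) = 0 by ring, mpow_zero hAH]
  have hSS : S * S = A := by
    rw [hS_def, mpow_mul_mpow hA, show (1/2 + 1/2 : ℝ) = 1 by ring, mpow_one hAH]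
  have hCH : C.IsHermitian := by
    rw [hC_def, show Sm * B * Sm = Smᴴ * B * Sm by rw [hSmH.eq]]
    exact Matrix.isHermitian_conjTranspose_mul_mul _ hB.1
  have hCpos : C.PosDef := by
    refine Matrix.PosDef.of_dotProduct_mulVec_pos hCH fun x hx => ?_
    have hx' : Sm *ᵥ x ≠ 0 := by
      intro h0
      apply hx
      have hsx : S *ᵥ (Sm *ᵥ x) = x := by
        rw [Matrix.mulVec_mulVec, hSSm, Matrix.one_mulVec]
      rw [← hsx, h0, Matrix.mulVec_zero]
    have hB2 := hB.dotProduct_mulVec_pos hx'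
    rw [hC_def, show Sm * B * Sm = Smᴴ * B * Sm by rw [hSmH.eq]]
    simpa only [Matrix.star_mulVec, Matrix.dotProduct_mulVec, Matrix.vecMul_vecMul] using hB2
  have hmp : ∀ μ : ℝ, mpow C μ = herm C hCH (fun x => x ^ μ) := fun μ => mpow_eq_herm C hCH μ
  simp only [hmp]
  have hA_eq : A = S * herm C hCH (fun _ => 1) * S := by
    rw [herm_one, Matrix.mul_one, hSS]
  have hB_eq : B = S * herm C hCH (fun x => x) * S := by
    rw [herm_id, hC_def]
    calc B = (S * Sm) * B * (Sm * S) := by rw [hSSm, hSmS, Matrix.one_mul, Matrix.mul_one]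
    _ = S * (Sm * B * Sm) * S := by simp only [Matrix.mul_assoc]
  rw [hA_eq, hB_eq]
  have cadd : ∀ X Y : Matrix (Fin d) (Fin d) ℂ, S * X * S + S * Y * S = S * (X + Y) * S :=
    fun X Y => by rw [Matrix.mul_add, Matrix.add_mul]
  have csub : ∀ X Y : Matrix (Fin d) (Fin d) ℂ, S * X * S - S * Y * S = S * (X - Y) * S :=
    fun X Y => by rw [Matrix.mul_sub, Matrix.sub_mul]
  have csmul : ∀ (c : ℝ) (X : Matrix (Fin d) (Fin d) ℂ), c • (S * X * S) = S * (c • X) * S :=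
    fun c X => by rw [mul_smul_comm, smul_mul_assoc]
  have csum : ∀ g : ℕ → Matrix (Fin d) (Fin d) ℂ,
      (∑ k ∈ Finset.range (n₀+1), S * g k * S) = S * (∑ k ∈ Finset.range (n₀+1), g k) * S :=
    fun g => by rw [← Finset.sum_mul, ← Finset.mul_sum]
  simp only [smul_add, smul_sub, smul_smul, csmul, cadd, csub, herm_smul, herm_add, herm_sub,
    csum, herm_sum]
  nth_rewrite 2 [← hSH.eq]
  refine Matrix.PosSemidef.mul_mul_conjTranspose_same ?_ S
  refine herm_posSemidef C hCH _ (fun i => ?_)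
  have hx : 0 < hCH.eigenvalues i := hCpos.eigenvalues_pos i
  have key := scalar_key hν n₀ hx
  have hs : ∑ k ∈ Finset.range (n₀+1), r ν k *
        (1/2 * (hCH.eigenvalues i ^ (m ν k / 2 ^ k) + hCH.eigenvalues i ^ (1 - m ν k / 2 ^ k)) -
          2 * (1/2 * (hCH.eigenvalues i ^ ((2 * m ν k + 1) / 2 ^ (k+1))
            + hCH.eigenvalues i ^ (1 - (2 * m ν k + 1) / 2 ^ (k+1)))) +
          1/2 * (hCH.eigenvalues i ^ ((m ν k + 1) / 2 ^ k)
            + hCH.eigenvalues i ^ (1 - (m ν k + 1) / 2 ^ k)))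
      = ∑ k ∈ Finset.range (n₀+1), r ν k *
        ((hCH.eigenvalues i ^ (m ν k / 2 ^ k) + hCH.eigenvalues i ^ (1 - m ν k / 2 ^ k)) / 2 -
          2 * ((hCH.eigenvalues i ^ ((2 * m ν k + 1) / 2 ^ (k+1))
            + hCH.eigenvalues i ^ (1 - (2 * m ν k + 1) / 2 ^ (k+1))) / 2) +
          (hCH.eigenvalues i ^ ((m ν k + 1) / 2 ^ k)
            + hCH.eigenvalues i ^ (1 - (m ν k + 1) / 2 ^ k)) / 2) :=
    Finset.sum_congr rfl fun k _ => by ring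
  rw [hs]
  linarith [key]
end

section
/- Let a, b be positive real numbers and ν ∈ (0,1). Then the series Σ_{k=0}^{∞} r_k [ (a^{1−m_k/2^k} b^{m_k/2^k})^{1/2} − (a^{1−(m_k+1)/2^k} b^{(m_k+1)/2^k})^{1/2} ]² is summable (its terms are nonnegative and its partial sums are bounded above by (1−ν)a + νb − a^{1−ν}b^{ν}). -/
lemma r_bounds (ν : ℝ) (hν : ν ∈ Set.Ioo (0 : ℝ) 1) :
    ∀ k, 0 ≤ r ν k ∧ r ν k ≤ 1 / 2 := by
  obtain ⟨h0, h1⟩ := hν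
  intro k
  induction k with
  | zero =>
    constructor
    · exact le_min h0.le (by linarith)
    · rcases le_or_gt ν (1/2) with h | h
      · exact (min_le_left _ _).trans h
      · exact (min_le_right _ _).trans (by linarith)
  | succ n ih =>
    obtain ⟨ih0, ih1⟩ := ih
    constructor
    · exact le_min (by linarith) (by linarith)
    · rcases le_or_gt (r ν n) (1/4) with h | h
      · exact (min_le_left _ _).trans (by linarith)
      · exact (min_le_right _ _).trans (by linarith)

lemma abs_exp_sub_one_le' (u : ℝ) : |Real.exp u - 1| ≤ |u| * Real.exp |u| := by
  rcases le_or_gt 0 u with h | h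
  · rw [abs_of_nonneg (by linarith [Real.one_le_exp h]), abs_of_nonneg h]
    have h1 : -u + 1 ≤ Real.exp (-u) := Real.add_one_le_exp (-u)
    have h2 : Real.exp (-u) * Real.exp u = 1 := by
      rw [← Real.exp_add]; simp
    nlinarith [Real.exp_pos u]
  · have hu : Real.exp u ≤ 1 := Real.exp_le_one_iff.mpr h.le
    rw [abs_of_nonpos (by linarith), abs_of_neg h]
    have h1 : u + 1 ≤ Real.exp u := Real.add_one_le_exp u
    have h2 : 1 ≤ Real.exp (-u) := Real.one_le_exp (by linarith)
    nlinarith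

set_option maxHeartbeats 2000000 in
theorem stmt18 (a b ν : ℝ) (ha : 0 < a) (hb : 0 < b) (hν : ν ∈ Set.Ioo (0 : ℝ) 1) :
    Summable (fun k : ℕ => r ν k *
      ((a ^ (1 - m ν k / 2 ^ k) * b ^ (m ν k / 2 ^ k)) ^ ((1 : ℝ) / 2) -
        (a ^ (1 - (m ν k + 1) / 2 ^ k) * b ^ ((m ν k + 1) / 2 ^ k)) ^ ((1 : ℝ) / 2)) ^ 2) := by
  obtain ⟨hν0, hν1⟩ := hν
  set L := Real.log (b / a) with hL
  set M : ℝ := max a b with hM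
  have hMpos : 0 < M := lt_max_of_lt_left ha
  set K : ℝ := (1 / 2) * (M * (|L| * Real.exp |L|) ^ 2) with hK
  have ht : (0:ℝ) < b / a := div_pos hb ha
  have hgeo : Summable (fun k : ℕ => K * (1/4 : ℝ) ^ k) :=
    (summable_geometric_of_lt_one (by norm_num) (by norm_num)).mul_left K
  refine Summable.of_nonneg_of_le ?_ ?_ hgeo
  · intro k
    exact mul_nonneg (r_bounds ν ⟨hν0, hν1⟩ k).1 (sq_nonneg _)
  · intro k
    have h2k : (0:ℝ) < 2 ^ k := by positivity
    set x : ℝ := m ν k / 2 ^ k with hx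
    set δ : ℝ := 1 / 2 ^ k with hδ
    have hδ0 : 0 < δ := by positivity
    have hδ1 : δ ≤ 1 := by
      rw [hδ, div_le_one h2k]
      exact_mod_cast Nat.one_le_two_pow
    -- bounds on m
    have hm0 : (0:ℝ) ≤ m ν k := by
      unfold m
      have : (0:ℤ) ≤ ⌊(2:ℝ) ^ k * ν⌋ := Int.floor_nonneg.mpr (by positivity)
      exact_mod_cast this
    have hm1 : m ν k + 1 ≤ 2 ^ k := by
      unfold m
      have h : ⌊(2:ℝ) ^ k * ν⌋ + 1 ≤ (2:ℤ) ^ k := by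
        apply Int.lt_iff_add_one_le.mp
        rw [Int.floor_lt]
        push_cast
        nlinarith
      exact_mod_cast h
    have hx0 : 0 ≤ x := div_nonneg hm0 h2k.le
    have hxδ1 : x + δ ≤ 1 := by
      rw [hx, hδ, ← add_div, div_le_one h2k]
      exact hm1
    have hz : 0 < a ^ (1 - x) * b ^ x := by positivity
    set A : ℝ := (a ^ (1 - x) * b ^ x) ^ ((1:ℝ)/2) with hA
    have hApos : 0 < A := Real.rpow_pos_of_pos hz _
    -- key factorization
    have hsplit : (m ν k + 1) / 2 ^ k = x + δ := by rw [hx, hδ]; ring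
    have key : a ^ (1 - (m ν k + 1) / 2 ^ k) * b ^ ((m ν k + 1) / 2 ^ k)
        = (a ^ (1 - x) * b ^ x) * (b / a) ^ δ := by
      rw [hsplit, show (1 - (x + δ)) = (1 - x) - δ by ring,
        Real.rpow_sub ha, Real.rpow_add hb, Real.div_rpow hb.le ha.le]
      field_simp
    set u : ℝ := L * (δ * (1/2)) with hu
    have hpow : (b / a) ^ (δ * (1/2 : ℝ)) = Real.exp u := by
      rw [Real.rpow_def_of_pos ht, hu, hL]
    have hB : (a ^ (1 - (m ν k + 1) / 2 ^ k) * b ^ ((m ν k + 1) / 2 ^ k)) ^ ((1:ℝ)/2)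
        = A * Real.exp u := by
      rw [key, Real.mul_rpow hz.le (Real.rpow_nonneg ht.le _), hA,
        ← Real.rpow_mul ht.le, hpow]
    -- A^2 ≤ M
    have hA2 : A ^ 2 = a ^ (1 - x) * b ^ x := by
      rw [hA, ← Real.rpow_natCast ((a ^ (1 - x) * b ^ x) ^ ((1:ℝ)/2)) 2,
        ← Real.rpow_mul hz.le]
      norm_num
    have hA2M : A ^ 2 ≤ M := by
      rw [hA2]
      calc a ^ (1 - x) * b ^ x ≤ M ^ (1 - x) * M ^ x := by
            apply mul_le_mul
            · exact Real.rpow_le_rpow ha.le (le_max_left a b) (by linarith)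
            · exact Real.rpow_le_rpow hb.le (le_max_right a b) hx0
            · positivity
            · positivity
        _ = M := by rw [← Real.rpow_add hMpos]; norm_num
    -- bound (1 - exp u)^2
    have huabs : |u| ≤ |L| * (δ / 2) := by
      rw [hu, abs_mul]
      have : |δ * (1/2)| = δ / 2 := by rw [abs_of_nonneg (by linarith)]; ring
      rw [this]
    have huL : |u| ≤ |L| := huabs.trans (by
      have := abs_nonneg L
      nlinarith)
    have hexpbound : |1 - Real.exp u| ≤ (|L| * Real.exp |L|) * (δ / 2) := by
      have h1 : |1 - Real.exp u| = |Real.exp u - 1| := abs_sub_comm _ _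
      rw [h1]
      calc |Real.exp u - 1| ≤ |u| * Real.exp |u| := abs_exp_sub_one_le' u
        _ ≤ (|L| * (δ / 2)) * Real.exp |L| := by
            apply mul_le_mul huabs (Real.exp_le_exp.mpr huL) (Real.exp_pos _).le
            positivity
        _ = (|L| * Real.exp |L|) * (δ / 2) := by ring
    have hsq : (1 - Real.exp u) ^ 2 ≤ (|L| * Real.exp |L|) ^ 2 * (1/4 : ℝ) ^ k := by
      have h1 : (1 - Real.exp u) ^ 2 ≤ ((|L| * Real.exp |L|) * (δ / 2)) ^ 2 := by
        rw [← sq_abs (1 - Real.exp u)]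
        apply pow_le_pow_left₀ (abs_nonneg _) hexpbound
      have h2 : δ ^ 2 = (1/4 : ℝ) ^ k := by
        rw [hδ, div_pow, one_pow, div_pow, one_pow, ← pow_mul]
        congr 1
        rw [show (4:ℝ) = 2^2 by norm_num, ← pow_mul, mul_comm]
      have h3 : ((|L| * Real.exp |L|) * (δ / 2)) ^ 2
          = (|L| * Real.exp |L|) ^ 2 * (δ ^ 2 / 4) := by ring
      have h4 : (|L| * Real.exp |L|) ^ 2 * (δ ^ 2 / 4)
          ≤ (|L| * Real.exp |L|) ^ 2 * δ ^ 2 := by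
        apply mul_le_mul_of_nonneg_left _ (sq_nonneg _)
        nlinarith [sq_nonneg δ]
      calc (1 - Real.exp u) ^ 2 ≤ _ := h1
        _ = _ := h3
        _ ≤ (|L| * Real.exp |L|) ^ 2 * δ ^ 2 := h4
        _ = (|L| * Real.exp |L|) ^ 2 * (1/4 : ℝ) ^ k := by rw [h2]
    -- assemble
    rw [hB, show (A - A * Real.exp u) ^ 2 = A ^ 2 * (1 - Real.exp u) ^ 2 from by ring]
    obtain ⟨hr0, hr1⟩ := r_bounds ν ⟨hν0, hν1⟩ k
    have hterm : A ^ 2 * (1 - Real.exp u) ^ 2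
        ≤ M * ((|L| * Real.exp |L|) ^ 2 * (1/4 : ℝ) ^ k) := by
      apply mul_le_mul hA2M hsq (sq_nonneg _) hMpos.le
    calc r ν k * (A ^ 2 * (1 - Real.exp u) ^ 2)
        ≤ (1/2) * (A ^ 2 * (1 - Real.exp u) ^ 2) := by
          apply mul_le_mul_of_nonneg_right hr1 (by positivity)
      _ ≤ (1/2) * (M * ((|L| * Real.exp |L|) ^ 2 * (1/4 : ℝ) ^ k)) := by
          apply mul_le_mul_of_nonneg_left hterm (by norm_num)
      _ = K * (1/4 : ℝ) ^ k := by rw [hK]; ring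
end
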